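/- Let n ≥ 3, let K be a division ring with at least 4 elements, and let P be an n-dimensional affine space over K. For all lines a₁, a₂, a₃ of P the following are equivalent: (i) for every line g there exists a line h such that g ∼ h and, for every i ∈ {1,2,3} (indices taken mod 3), aᵢ ∼ aᵢ₊₁ and aᵢ ∼ h; (ii) a₁, a₂, a₃ are pairwise distinct and concurrent. -/

import Mathlib

/-- `a` is an affine line: a nonempty affine subspace whose direction has finrank 1. -/
def ALine (K : Type*) {V P : Type*} [DivisionRing K] [AddCommGroup V] [Module K V]
    [AddTorsor V P] (a : AffineSubspace K P) : Prop :=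
  (a : Set P).Nonempty ∧ Module.finrank K a.direction = 1

/-- `a` is an affine plane: a nonempty affine subspace whose direction has finrank 2. -/
def APlane (K : Type*) {V P : Type*} [DivisionRing K] [AddCommGroup V] [Module K V]
    [AddTorsor V P] (a : AffineSubspace K P) : Prop :=
  (a : Set P).Nonempty ∧ Module.finrank K a.direction = 2

/-- Two lines intersect: they are different and have a common point. -/
def AMeets {K V P : Type*} [DivisionRing K] [AddCommGroup V] [Module K V]
    [AddTorsor V P] (a b : AffineSubspace K P) : Prop :=
  a ≠ b ∧ ((a : Set P) ∩ (b : Set P)).Nonempty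

/-- `x` meets the lines `y` and `z` in two distinct points. -/
def AMeetsTwo {K V P : Type*} [DivisionRing K] [AddCommGroup V] [Module K V]
    [AddTorsor V P] (x y z : AffineSubspace K P) : Prop :=
  AMeets x y ∧ AMeets x z ∧ x ⊓ y ≠ x ⊓ z

section Helpers

open Module AffineSubspace

variable {K V P : Type*} [DivisionRing K] [AddCommGroup V] [Module K V] [AddTorsor V P]

private lemma avoid3 (hK : (4 : Cardinal) ≤ Cardinal.mk K) (x y z : K) :
    ∃ c : K, c ≠ x ∧ c ≠ y ∧ c ≠ z := by
  by_contra h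
  push_neg at h
  have hsub : (Set.univ : Set K) ⊆ {x, y, z} := by
    intro c _
    by_cases hx : c = x
    · exact Or.inl hx
    by_cases hy : c = y
    · exact Or.inr (Or.inl hy)
    · exact Or.inr (Or.inr (h c hx hy))
  have h1 : Cardinal.mk K ≤ 3 := by
    calc Cardinal.mk K = Cardinal.mk (Set.univ : Set K) := Cardinal.mk_univ.symm
      _ ≤ Cardinal.mk ({x, y, z} : Set K) := Cardinal.mk_le_mk_of_subset hsub
      _ ≤ Cardinal.mk ({y, z} : Set K) + 1 := Cardinal.mk_insert_le
      _ ≤ (Cardinal.mk ({z} : Set K) + 1) + 1 := by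
          gcongr
          exact Cardinal.mk_insert_le
      _ = 3 := by rw [Cardinal.mk_singleton]; norm_num
  have h2 := hK.trans h1
  norm_num at h2

private lemma aline_span_pair {p q : P} (h : p ≠ q) : ALine K (affineSpan K {p, q}) := by
  constructor
  · exact ⟨p, subset_affineSpan K _ (Set.mem_insert _ _)⟩
  · rw [direction_affineSpan, vectorSpan_pair, finrank_span_singleton (vsub_ne_zero.2 h)]

private lemma aline_eq_span_pair {a : AffineSubspace K P} (ha : ALine K a) {p q : P}
    (hp : p ∈ a) (hq : q ∈ a) (hpq : p ≠ q) : a = affineSpan K {p, q} := by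
  have hle : affineSpan K ({p, q} : Set P) ≤ a := by
    refine affineSpan_le.2 ?_
    rintro x (rfl | rfl)
    · exact hp
    · exact hq
  have hdle := AffineSubspace.direction_le hle
  haveI : FiniteDimensional K a.direction :=
    FiniteDimensional.of_finrank_pos (by rw [ha.2]; norm_num)
  have hdeq : (affineSpan K ({p, q} : Set P)).direction = a.direction :=
    Submodule.eq_of_le_of_finrank_le hdle (by rw [ha.2, (aline_span_pair hpq).2])
  exact (AffineSubspace.ext_of_direction_eq hdeq
    ⟨p, subset_affineSpan K _ (Set.mem_insert _ _), hp⟩).symm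

private lemma meet_unique {a b : AffineSubspace K P} (ha : ALine K a) (hb : ALine K b)
    (hab : a ≠ b) {x y : P} (hxa : x ∈ a) (hxb : x ∈ b) (hya : y ∈ a) (hyb : y ∈ b) : x = y := by
  by_contra hxy
  exact hab ((aline_eq_span_pair ha hxa hya hxy).trans (aline_eq_span_pair hb hxb hyb hxy).symm)

private lemma aline_exists_param {a : AffineSubspace K P} (ha : ALine K a) :
    ∃ (p₀ : P) (v : V), v ≠ 0 ∧ p₀ ∈ a ∧ v ∈ a.direction := by
  obtain ⟨p₀, hp₀⟩ := ha.1
  have hbot : a.direction ≠ ⊥ := by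
    intro h
    have := ha.2
    rw [h] at this
    simp at this
  obtain ⟨v, hv, hv0⟩ := (Submodule.ne_bot_iff _).1 hbot
  exact ⟨p₀, v, hv0, hp₀, hv⟩

private lemma avoid_on_line (hK : (4 : Cardinal) ≤ Cardinal.mk K) {g : AffineSubspace K P}
    (hg : ALine K g) (b : Fin 3 → AffineSubspace K P) (hb : ∀ i, ALine K (b i))
    (hbg : ∀ i, b i ≠ g) : ∃ q ∈ g, ∀ i, q ∉ b i := by
  classical
  obtain ⟨p₀, v, hv0, hp₀, hv⟩ := aline_exists_param hg
  set bad : Fin 3 → K := fun i => if h : ∃ c : K, c • v +ᵥ p₀ ∈ b i then h.choose else 0 with hbad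
  obtain ⟨c, hc0, hc1, hc2⟩ := avoid3 hK (bad 0) (bad 1) (bad 2)
  refine ⟨c • v +ᵥ p₀,
    AffineSubspace.vadd_mem_of_mem_direction (Submodule.smul_mem _ _ hv) hp₀, ?_⟩
  intro i hi
  have hex : ∃ c' : K, c' • v +ᵥ p₀ ∈ b i := ⟨c, hi⟩
  have hbadmem : bad i • v +ᵥ p₀ ∈ b i := by
    rw [hbad]; simp only [dif_pos hex]; exact hex.choose_spec
  have hcbad : c ≠ bad i := by fin_cases i <;> assumption
  have hne : c • v +ᵥ p₀ ≠ bad i • v +ᵥ p₀ := by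
    intro h
    have h' := vadd_right_cancel _ h
    exact hcbad (smul_left_injective K hv0 h')
  have h1 : c • v +ᵥ p₀ ∈ g :=
    AffineSubspace.vadd_mem_of_mem_direction (Submodule.smul_mem _ _ hv) hp₀
  have h2 : bad i • v +ᵥ p₀ ∈ g :=
    AffineSubspace.vadd_mem_of_mem_direction (Submodule.smul_mem _ _ hv) hp₀
  exact hbg i ((aline_eq_span_pair (hb i) hi hbadmem hne).trans
    (aline_eq_span_pair hg h1 h2 hne).symm)

private lemma avoid_dirs [FiniteDimensional K V] (hK : (4 : Cardinal) ≤ Cardinal.mk K)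
    (hdim2 : 2 ≤ Module.finrank K V) (L : Fin 4 → Submodule K V)
    (hL : ∀ i, Module.finrank K (L i) ≤ 1) : ∃ w : V, ∀ i, w ∉ L i := by
  classical
  have hnt : Nontrivial V := Module.nontrivial_of_finrank_pos (R := K) (by omega)
  obtain ⟨e₁, he₁⟩ := exists_ne (0 : V)
  have hspan_ne : (K ∙ e₁) ≠ ⊤ := by
    intro h
    have h2 : Module.finrank K (K ∙ e₁) = Module.finrank K V := by rw [h, finrank_top]
    rw [finrank_span_singleton he₁] at h2
    omega
  obtain ⟨e₂, he₂⟩ : ∃ e₂, e₂ ∉ (K ∙ e₁) := by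
    by_contra h
    push_neg at h
    exact hspan_ne (Submodule.eq_top_iff'.2 h)
  by_contra hcon
  push_neg at hcon
  have key : ∀ i, e₁ ∈ L i → e₂ ∈ L i → False := by
    intro i h1 h2
    have hle : (K ∙ e₁) ≤ L i := (Submodule.span_singleton_le_iff_mem _ _).2 h1
    have heq : (K ∙ e₁) = L i :=
      Submodule.eq_of_le_of_finrank_le hle (by rw [finrank_span_singleton he₁]; exact hL i)
    exact he₂ (heq ▸ h2)
  set bad : Fin 4 → K := fun i => if h : ∃ c : K, e₁ + c • e₂ ∈ L i then h.choose else 0 with hbad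
  obtain ⟨j, hj⟩ := hcon e₂
  obtain ⟨c, hc1, hc2, hc3⟩ := avoid3 hK (bad (j + 1)) (bad (j + 2)) (bad (j + 3))
  obtain ⟨i, hi⟩ := hcon (e₁ + c • e₂)
  have he₂i : e₂ ∈ L i := by
    rcases eq_or_ne i j with rfl | hij
    · exact hj
    · have hex : ∃ c' : K, e₁ + c' • e₂ ∈ L i := ⟨c, hi⟩
      have hb : e₁ + bad i • e₂ ∈ L i := by
        rw [hbad]; simp only [dif_pos hex]; exact hex.choose_spec
      have hcb : c ≠ bad i := by
        have h3 : ∀ i j : Fin 4, i ≠ j → i = j + 1 ∨ i = j + 2 ∨ i = j + 3 := by decide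
        rcases h3 i j hij with h4 | h4 | h4 <;> rw [h4] <;> assumption
      have hdiff : (c - bad i) • e₂ ∈ L i := by
        have h5 := Submodule.sub_mem _ hi hb
        have h6 : (e₁ + c • e₂) - (e₁ + bad i • e₂) = (c - bad i) • e₂ := by
          rw [sub_smul]; abel
        rwa [h6] at h5
      have h7 := Submodule.smul_mem _ (c - bad i)⁻¹ hdiff
      rwa [inv_smul_smul₀ (sub_ne_zero.2 hcb)] at h7
  have he₁i : e₁ ∈ L i := by
    have h8 := Submodule.sub_mem _ hi (Submodule.smul_mem _ c he₂i)
    simpa using h8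
  exact key i he₁i he₂i

end Helpers

open Module AffineSubspace in
theorem statement10 {K V P : Type*} [DivisionRing K] [AddCommGroup V] [Module K V]
    [AddTorsor V P] {n : ℕ} (hn : 3 ≤ n)
    (hK : (4 : Cardinal) ≤ Cardinal.mk K)
    (hdim : Module.finrank K V = n)
    (a : Fin 3 → AffineSubspace K P) (ha : ∀ i, ALine K (a i)) :
    (∀ g : AffineSubspace K P, ALine K g → ∃ h : AffineSubspace K P, ALine K h ∧ AMeets g h ∧
        ∀ i : Fin 3, AMeets (a i) (a (i + 1)) ∧ AMeets (a i) h) ↔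
    ((∀ i j : Fin 3, i ≠ j → a i ≠ a j) ∧ ∃ p : P, ∀ i : Fin 3, p ∈ a i) := by
  haveI hFD : FiniteDimensional K V := FiniteDimensional.of_finrank_pos (by omega)
  constructor
  · -- (i) → (ii)
    intro H
    obtain ⟨h0, hh0, hgh0, hAll⟩ := H (a 0) (ha 0)
    have m01 : AMeets (a 0) (a 1) := (hAll 0).1
    have m12 : AMeets (a 1) (a 2) := (hAll 1).1
    have m20 : AMeets (a 2) (a 0) := (hAll 2).1
    have d01 : a 0 ≠ a 1 := m01.1
    have d12 : a 1 ≠ a 2 := m12.1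
    have d20 : a 2 ≠ a 0 := m20.1
    have hdist : ∀ i j : Fin 3, i ≠ j → a i ≠ a j := by
      intro i j hij
      fin_cases i <;> fin_cases j <;>
        first
          | exact absurd rfl hij
          | exact d01
          | exact d01.symm
          | exact d12
          | exact d12.symm
          | exact d20
          | exact d20.symm
    obtain ⟨p, hp0, hp1⟩ := m01.2
    refine ⟨hdist, p, ?_⟩
    intro i
    by_cases hp2 : p ∈ a 2
    · fin_cases i <;> assumption
    exfalso
    obtain ⟨q, hq2, hq0⟩ := m20.2
    obtain ⟨r, hr1, hr2⟩ := m12.2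
    have hqp : q ≠ p := fun h => hp2 (h ▸ hq2)
    have hrp : r ≠ p := fun h => hp2 (h ▸ hr2)
    have hqr : q ≠ r := by
      intro h
      subst h
      exact hqp (meet_unique (ha 0) (ha 1) d01 hq0 hr1 hp0 hp1)
    have e0 : a 0 = affineSpan K {p, q} := aline_eq_span_pair (ha 0) hp0 hq0 (Ne.symm hqp)
    have e1 : a 1 = affineSpan K {p, r} := aline_eq_span_pair (ha 1) hp1 hr1 (Ne.symm hrp)
    have e2 : a 2 = affineSpan K {q, r} := aline_eq_span_pair (ha 2) hq2 hr2 hqr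
    set E := affineSpan K ({p, q, r} : Set P) with hE
    have hle0 : a 0 ≤ E := by
      rw [e0]
      apply affineSpan_mono
      intro x hx
      rcases hx with rfl | rfl
      · exact Set.mem_insert _ _
      · exact Set.mem_insert_of_mem _ (Set.mem_insert _ _)
    have hle1 : a 1 ≤ E := by
      rw [e1]
      apply affineSpan_mono
      intro x hx
      rcases hx with rfl | rfl
      · exact Set.mem_insert _ _
      · exact Set.mem_insert_of_mem _ (Set.mem_insert_of_mem _ rfl)
    have hle2 : a 2 ≤ E := by
      rw [e2]
      apply affineSpan_mono
      intro x hx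
      rcases hx with rfl | rfl
      · exact Set.mem_insert_of_mem _ (Set.mem_insert _ _)
      · exact Set.mem_insert_of_mem _ (Set.mem_insert_of_mem _ rfl)
    have hEdir : Module.finrank K E.direction ≤ 2 := by
      rw [hE, direction_affineSpan,
        vectorSpan_eq_span_vsub_set_right K (Set.mem_insert p {q, r})]
      have himg : ((· -ᵥ p) '' ({p, q, r} : Set P) : Set V) = {0, q -ᵥ p, r -ᵥ p} := by
        simp [Set.image_insert_eq, vsub_self]
      rw [himg, Submodule.span_insert_zero, Submodule.span_insert]
      refine (Submodule.finrank_add_le_finrank_add_finrank _ _).trans ?_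
      have hsing : ∀ x : V, Module.finrank K (K ∙ x) ≤ 1 := by
        intro x
        rcases eq_or_ne x 0 with rfl | hx
        · rw [Submodule.span_zero_singleton]
          simp
        · rw [finrank_span_singleton hx]
      have hq' := hsing (q -ᵥ p)
      have hr' := hsing (r -ᵥ p)
      omega
    have hEne : E ≠ ⊤ := by
      intro h
      have hfr : Module.finrank K E.direction = n := by
        rw [h, AffineSubspace.direction_top, finrank_top, hdim]
      omega
    obtain ⟨x₀, hx₀⟩ : ∃ x₀ : P, x₀ ∉ E := by
      by_contra h
      push_neg at h
      exact hEne (eq_top_iff.2 fun x _ => h x)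
    set g := AffineSubspace.mk' x₀ (a 0).direction with hgdef
    have hg : ALine K g := ⟨AffineSubspace.mk'_nonempty _ _,
      by rw [hgdef, AffineSubspace.direction_mk']; exact (ha 0).2⟩
    have hgdisj : ∀ y, y ∈ g → y ∉ E := by
      intro y hy hyE
      have hv : y -ᵥ x₀ ∈ (a 0).direction := AffineSubspace.mem_mk'.1 hy
      have hvE : y -ᵥ x₀ ∈ E.direction := AffineSubspace.direction_le hle0 hv
      have hx₀E : x₀ ∈ E := by
        have h' := AffineSubspace.vadd_mem_of_mem_direction (Submodule.neg_mem _ hvE) hyE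
        rwa [show -(y -ᵥ x₀) +ᵥ y = x₀ by rw [neg_vsub_eq_vsub_rev, vsub_vadd]] at h'
      exact hx₀ hx₀E
    obtain ⟨h, hh, ⟨hghne, t, htg, hth⟩, hAll'⟩ := H g hg
    obtain ⟨x0, hx0a, hx0h⟩ := (hAll' 0).2.2
    obtain ⟨x1, hx1a, hx1h⟩ := (hAll' 1).2.2
    obtain ⟨x2, hx2a, hx2h⟩ := (hAll' 2).2.2
    have hhle : h ≤ E := by
      rcases eq_or_ne x0 x1 with heq | hne
      · have hx0p : x0 = p := meet_unique (ha 0) (ha 1) d01 hx0a (heq ▸ hx1a) hp0 hp1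
        have hx02 : x0 ≠ x2 := by
          intro h'
          exact hp2 (hx0p ▸ h' ▸ hx2a)
        rw [aline_eq_span_pair hh hx0h hx2h hx02]
        refine affineSpan_le.2 ?_
        rintro x (rfl | rfl)
        · exact hle0 hx0a
        · exact hle2 hx2a
      · rw [aline_eq_span_pair hh hx0h hx1h hne]
        refine affineSpan_le.2 ?_
        rintro x (rfl | rfl)
        · exact hle0 hx0a
        · exact hle1 hx1a
    exact hgdisj t htg (hhle hth)
  · -- (ii) → (i)
    rintro ⟨hdist, p, hp⟩ g hg
    have hsucc : ∀ i : Fin 3, i ≠ i + 1 := by decide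
    by_cases hpg : p ∈ g
    · obtain ⟨w, hw⟩ := avoid_dirs hK (by omega)
        ![g.direction, (a 0).direction, (a 1).direction, (a 2).direction]
        (by
          intro i
          fin_cases i <;>
            simp [Matrix.vecHead, Matrix.vecTail, hg.2, (ha 0).2, (ha 1).2, (ha 2).2]
          exacts [hg.2.le, (ha 0).2.le, (ha 1).2.le, (ha 2).2.le])
      have hw0 : w ∉ g.direction := by
        simpa [Matrix.vecHead, Matrix.vecTail] using hw 0
      have hwa : ∀ i : Fin 3, w ∉ (a i).direction := by
        intro i
        fin_cases i
        · simpa [Matrix.vecHead, Matrix.vecTail] using hw 1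
        · simpa [Matrix.vecHead, Matrix.vecTail] using hw 2
        · simpa [Matrix.vecHead, Matrix.vecTail] using hw 3
      have hwne : w ≠ 0 := fun h0 => hw0 (h0 ▸ Submodule.zero_mem _)
      set h := AffineSubspace.mk' p (K ∙ w) with hhdef
      have hh : ALine K h := ⟨AffineSubspace.mk'_nonempty _ _,
        by rw [hhdef, AffineSubspace.direction_mk']; exact finrank_span_singleton hwne⟩
      have hne : ∀ s : AffineSubspace K P, w ∉ s.direction → s ≠ h := by
        intro s hs heq
        apply hs
        rw [heq, hhdef, AffineSubspace.direction_mk']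
        exact Submodule.mem_span_singleton_self w
      refine ⟨h, hh, ⟨(hne g hw0), p, hpg, AffineSubspace.self_mem_mk' _ _⟩, ?_⟩
      intro i
      exact ⟨⟨hdist i (i + 1) (hsucc i), p, hp i, hp (i + 1)⟩,
        ⟨hne (a i) (hwa i), p, hp i, AffineSubspace.self_mem_mk' _ _⟩⟩
    · have hag : ∀ i, a i ≠ g := fun i h' => hpg (h' ▸ hp i)
      obtain ⟨q, hqg, hq⟩ := avoid_on_line hK hg a ha hag
      have hpq : p ≠ q := fun h' => hpg (h' ▸ hqg)
      set h := affineSpan K ({p, q} : Set P) with hhdef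
      have hh : ALine K h := aline_span_pair hpq
      have hph : p ∈ h := subset_affineSpan _ _ (Set.mem_insert _ _)
      have hqh : q ∈ h := subset_affineSpan _ _ (Set.mem_insert_of_mem _ rfl)
      refine ⟨h, hh, ⟨fun h' => hpg (h' ▸ hph), q, hqg, hqh⟩, ?_⟩
      intro i
      exact ⟨⟨hdist i (i + 1) (hsucc i), p, hp i, hp (i + 1)⟩,
        ⟨fun h' => hq i (by rw [h']; exact hqh), p, hp i, hph⟩⟩
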